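/- MacMahon's Master Theorem: Let A = (a_{ij}) be an r×r matrix with entries in a commutative ring, and let x_1,...,x_r be commuting indeterminates. For 1 ≤ i ≤ r set X_i = Σ_j a_{ij} x_j. For a vector (m_1,...,m_r) of non-negative integers, let G(m_1,...,m_r) be the coefficient of x_1^{m_1}···x_r^{m_r} in Π_i X_i^{m_i}. Then the sum Σ_{m_1,...,m_r ≥ 0} G(m_1,...,m_r) equals 1/det(I − A) as formal power series. -/

import Mathlib

open MvPolynomial Finset

namespace MMT

variable {R : Type*} [CommRing R] {r : ℕ}




noncomputable def sub (A : Matrix (Fin r) (Fin r) R) :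
    MvPolynomial (Fin r) R →ₐ[R] MvPolynomial (Fin r) R :=
  aeval fun i => ∑ j, C (A i j) * X j

lemma monomial_one_eq (m : Fin r →₀ ℕ) :
    (monomial m (1 : R)) = ∏ i, X i ^ m i := by
  rw [← prod_X_pow_eq_monomial]
  rw [Finset.prod_subset (Finset.subset_univ m.support)]
  intro x _ hx
  simp [Finsupp.notMem_support_iff.mp hx]

lemma sub_monomial (A : Matrix (Fin r) (Fin r) R) (m : Fin r →₀ ℕ) :
    sub A (monomial m 1) = ∏ i, (∑ j, C (A i j) * X j) ^ m i := by
  rw [monomial_one_eq, map_prod]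
  simp [sub]

lemma sub_comp (A B : Matrix (Fin r) (Fin r) R) :
    (sub A).comp (sub B) = sub (B * A) := by
  apply MvPolynomial.algHom_ext
  intro i
  simp only [AlgHom.comp_apply, sub, aeval_X, map_sum, map_mul, aeval_C, algebraMap_eq]
  simp only [Finset.mul_sum, Matrix.mul_apply, map_sum, Finset.sum_mul]
  rw [Finset.sum_comm]
  refine Finset.sum_congr rfl fun j _ => ?_
  refine Finset.sum_congr rfl fun k _ => ?_
  rw [C_mul, mul_assoc]

lemma sub_isHomogeneous (A : Matrix (Fin r) (Fin r) R) (m : Fin r →₀ ℕ) :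
    (sub A (monomial m 1)).IsHomogeneous (m.degree) := by
  rw [sub_monomial]
  have : (m.degree) = ∑ i, m i := by
    rw [Finsupp.degree_apply, Finset.sum_subset (Finset.subset_univ m.support)]
    intro x _ hx
    simpa using Finsupp.notMem_support_iff.mp hx
  rw [this]
  apply MvPolynomial.IsHomogeneous.prod
  intro i _
  have h1 : (∑ j, C (A i j) * X j : MvPolynomial (Fin r) R).IsHomogeneous 1 := by
    apply MvPolynomial.IsHomogeneous.sum
    intro j _
    simpa using (MvPolynomial.isHomogeneous_X R j).C_mul (A i j)
  simpa using h1.pow (m i)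

/-! ## The transfer matrix on degree-n monomials -/

noncomputable def hcoeff (A : Matrix (Fin r) (Fin r) R) (n : ℕ) : R :=
  ∑ m ∈ Finset.Nat.antidiagonalTuple r n,
    coeff (Finsupp.equivFunOnFinite.symm m) (∏ i, (∑ j, C (A i j) * X j) ^ m i)

lemma degree_eq_sum (d : Fin r →₀ ℕ) : d.degree = ∑ i : Fin r, d i :=
  Finset.sum_subset (Finset.subset_univ _) (fun x _ hx => Finsupp.notMem_support_iff.mp hx)

lemma degree_symm_eq {n : ℕ} {m : Fin r → ℕ} (hm : m ∈ Finset.Nat.antidiagonalTuple r n) :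
    (Finsupp.equivFunOnFinite.symm m).degree = n := by
  rw [Finset.Nat.mem_antidiagonalTuple] at hm
  rw [degree_eq_sum, ← hm]
  exact Finset.sum_congr rfl fun i _ => by simp

noncomputable def Tmat (n : ℕ) (A : Matrix (Fin r) (Fin r) R) :
    Matrix (Finset.Nat.antidiagonalTuple r n) (Finset.Nat.antidiagonalTuple r n) R :=
  fun p q => coeff (Finsupp.equivFunOnFinite.symm q.1)
    (sub A (monomial (Finsupp.equivFunOnFinite.symm p.1) 1))

lemma trace_Tmat (n : ℕ) (A : Matrix (Fin r) (Fin r) R) :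
    (Tmat n A).trace = hcoeff A n := by
  rw [Matrix.trace, hcoeff, ← Finset.sum_coe_sort (Finset.Nat.antidiagonalTuple r n)]
  refine Finset.sum_congr rfl fun p _ => ?_
  rw [Matrix.diag_apply, Tmat, sub_monomial]
  simp

lemma mem_adT_map {n : ℕ} (d : Fin r →₀ ℕ) :
    d ∈ (Finset.Nat.antidiagonalTuple r n).map
        (Finsupp.equivFunOnFinite.symm.toEmbedding) ↔ d.degree = n := by
  rw [Finset.mem_map]
  constructor
  · rintro ⟨m, hm, rfl⟩
    exact degree_symm_eq hm
  · intro hd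
    refine ⟨Finsupp.equivFunOnFinite d, ?_, by simp⟩
    rw [Finset.Nat.mem_antidiagonalTuple]
    rw [degree_eq_sum] at hd
    exact hd

lemma Tmat_mul (n : ℕ) (A B : Matrix (Fin r) (Fin r) R) :
    Tmat n (B * A) = Tmat n B * Tmat n A := by
  ext p q
  have h1 : sub (B * A) (monomial (Finsupp.equivFunOnFinite.symm p.1) (1:R))
      = sub A (sub B (monomial (Finsupp.equivFunOnFinite.symm p.1) 1)) := by
    rw [← sub_comp]; rfl
  set Q := sub B (monomial (Finsupp.equivFunOnFinite.symm p.1) (1:R)) with hQ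
  have hexp : ∀ d : Fin r →₀ ℕ, coeff (Finsupp.equivFunOnFinite.symm q.1) (sub A Q)
      = ∑ d ∈ Q.support, coeff d Q * coeff (Finsupp.equivFunOnFinite.symm q.1)
          (sub A (monomial d 1)) := by
    intro _
    conv_lhs => rw [MvPolynomial.as_sum Q]
    rw [map_sum, MvPolynomial.coeff_sum]
    refine Finset.sum_congr rfl fun d _ => ?_
    have : (monomial d) (coeff d Q) = C (coeff d Q) * monomial d 1 := by
      rw [monomial_eq, monomial_eq, map_one, one_mul]
    rw [this, map_mul]
    have hC : (sub A) (C (coeff d Q)) = C (coeff d Q) := by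
      simp [sub, algebraMap_eq]
    rw [hC, coeff_C_mul]
  -- RHS
  rw [Matrix.mul_apply, Tmat, h1, hexp 0]
  -- convert RHS sum over subtype to sum over finset
  have hRHS : ∑ q' : Finset.Nat.antidiagonalTuple r n, Tmat n B p q' * Tmat n A q' q
      = ∑ m' ∈ (Finset.Nat.antidiagonalTuple r n).map
          (Finsupp.equivFunOnFinite.symm.toEmbedding),
          coeff m' Q * coeff (Finsupp.equivFunOnFinite.symm q.1) (sub A (monomial m' 1)) := by
    rw [Finset.sum_map]
    rw [← Finset.sum_coe_sort (Finset.Nat.antidiagonalTuple r n)]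
    rfl
  rw [hRHS]
  -- both sums equal sum over union
  set f : (Fin r →₀ ℕ) → R := fun m' =>
    coeff m' Q * coeff (Finsupp.equivFunOnFinite.symm q.1) (sub A (monomial m' 1)) with hf
  have hhom : Q.IsHomogeneous n := by
    have := sub_isHomogeneous B (Finsupp.equivFunOnFinite.symm p.1)
    rwa [degree_symm_eq p.2] at this
  have key : ∀ (S : Finset (Fin r →₀ ℕ)),
      Q.support ⊆ S → ((Finset.Nat.antidiagonalTuple r n).map
          (Finsupp.equivFunOnFinite.symm.toEmbedding)) ⊆ S →
      ∑ d ∈ Q.support, f d = ∑ d ∈ S, f d ∧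
      ∑ d ∈ (Finset.Nat.antidiagonalTuple r n).map
          (Finsupp.equivFunOnFinite.symm.toEmbedding), f d = ∑ d ∈ S, f d := by
    intro S h1' h2'
    constructor
    · refine Finset.sum_subset h1' fun d _ hd => ?_
      rw [hf]
      simp only []
      rw [MvPolynomial.notMem_support_iff.mp hd, zero_mul]
    · refine Finset.sum_subset h2' fun d hd hd' => ?_
      rw [hf]
      simp only []
      by_cases hsup : d ∈ Q.support
      · -- then degree d = n by homogeneity, so d ∈ map, contradiction? no:
        -- d ∈ S but not in map set: coeff d Q could be nonzero only if degree = n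
        have : coeff d Q ≠ 0 := MvPolynomial.mem_support_iff.mp hsup
        have hdeg : d.degree = n := by
          by_contra hne
          exact this (hhom.coeff_eq_zero hne)
        exact absurd ((mem_adT_map d).mpr hdeg) hd'
      · rw [MvPolynomial.notMem_support_iff.mp hsup, zero_mul]
  obtain ⟨e1, e2⟩ := key (Q.support ∪ _) Finset.subset_union_left Finset.subset_union_right
  rw [e1, e2]

lemma hcoeff_mul_comm (A B : Matrix (Fin r) (Fin r) R) :
    hcoeff (A * B) = hcoeff (B * A) := by
  funext n
  rw [← trace_Tmat, ← trace_Tmat, Tmat_mul n B A, Tmat_mul n A B, Matrix.trace_mul_comm]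

lemma hcoeff_conj (P A Pinv : Matrix (Fin r) (Fin r) R) (h1 : P * Pinv = 1) :
    hcoeff (P * A * Pinv) = hcoeff A := by
  have h2 : Pinv * P = 1 := mul_eq_one_comm.mp h1
  calc hcoeff (P * A * Pinv) = hcoeff (Pinv * (P * A)) := hcoeff_mul_comm _ _
    _ = hcoeff A := by rw [← mul_assoc, h2, one_mul]





/-- weight of a monomial -/
def wt (d : Fin r →₀ ℕ) : ℕ := ∑ j : Fin r, d j * (j : ℕ)

lemma wt_add (a b : Fin r →₀ ℕ) : wt (a + b) = wt a + wt b := by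
  simp [wt, add_mul, Finset.sum_add_distrib]

lemma wt_single (j : Fin r) (k : ℕ) : wt (Finsupp.single j k) = k * j := by
  simp [wt, Finsupp.single_apply]

lemma le_wt {j : Fin r} {d : Fin r →₀ ℕ} (h : 1 ≤ d j) : (j : ℕ) ≤ wt d := by
  calc (j : ℕ) = 1 * j := (one_mul _).symm
  _ ≤ d j * j := Nat.mul_le_mul_right _ h
  _ ≤ wt d := Finset.single_le_sum (f := fun x => d x * (x : ℕ))
      (fun _ _ => Nat.zero_le _) (Finset.mem_univ j)

lemma wt_sub_single {j : Fin r} {d : Fin r →₀ ℕ} (h : 1 ≤ d j) :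
    wt (d - Finsupp.single j 1) = wt d - j := by
  have hle : Finsupp.single j 1 ≤ d := Finsupp.single_le_iff.mpr h
  have : (d - Finsupp.single j 1) + Finsupp.single j 1 = d := tsub_add_cancel_of_le hle
  have h2 := congrArg wt this
  rw [wt_add, wt_single, one_mul] at h2
  omega

noncomputable def cnt (M : Multiset (Fin r)) : Fin r →₀ ℕ := Multiset.toFinsupp M

lemma cnt_cons (i : Fin r) (M : Multiset (Fin r)) :
    cnt (i ::ₘ M) = Finsupp.single i 1 + cnt M := by
  rw [cnt, ← Multiset.singleton_add, map_add, cnt]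
  congr 1
  ext a
  simp [Multiset.toFinsupp_apply, Multiset.count_singleton, Finsupp.single_apply, eq_comm]

def wtM (M : Multiset (Fin r)) : ℕ := (M.map (Fin.val)).sum

lemma wtM_cons (i : Fin r) (M : Multiset (Fin r)) : wtM (i ::ₘ M) = i + wtM M := by
  simp [wtM]

lemma wt_cnt (M : Multiset (Fin r)) : wt (cnt M) = wtM M := by
  induction M using Multiset.induction_on with
  | empty => simp [cnt, wtM, wt]
  | cons i M ih => rw [cnt_cons, wt_add, wt_single, wtM_cons, one_mul, ih]

section Tri

variable (A : Matrix (Fin r) (Fin r) R) (hA : ∀ i j : Fin r, j < i → A i j = 0)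

include hA in
/-- support of a linear form `∑ j, C (A i j) * X j` for triangular `A`:
only monomials `single j 1` with `i ≤ j` -/
lemma support_linear {i : Fin r} {d : Fin r →₀ ℕ}
    (hd : d ∈ (∑ j, C (A i j) * X j).support) : ∃ j : Fin r, i ≤ j ∧ d = Finsupp.single j 1 := by
  have h0 : coeff d (∑ j, C (A i j) * X j) ≠ 0 := MvPolynomial.mem_support_iff.mp hd
  by_contra hcon
  push_neg at hcon
  apply h0
  rw [MvPolynomial.coeff_sum]
  refine Finset.sum_eq_zero fun j _ => ?_
  rw [coeff_C_mul, MvPolynomial.coeff_X']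
  by_cases hij : i ≤ j
  · have := hcon j hij
    rw [if_neg (fun hh => this hh.symm), mul_zero]
  · rw [hA i j (lt_of_not_ge hij), zero_mul]

include hA in
lemma tri_key : ∀ M : Multiset (Fin r),
    (∀ d ∈ ((M.map fun i => ∑ j, C (A i j) * X j)).prod.support, wtM M ≤ wt d)
    ∧ coeff (cnt M) ((M.map fun i => ∑ j, C (A i j) * X j)).prod
        = (M.map fun i => A i i).prod := by
  intro M
  induction M using Multiset.induction_on with
  | empty =>
    constructor
    · intro d hd
      simp only [Multiset.map_zero, Multiset.prod_zero] at hd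
      exact Nat.zero_le _
    · simp [cnt]
  | cons i M ih =>
    obtain ⟨ih1, ih2⟩ := ih
    simp only [Multiset.map_cons, Multiset.prod_cons]
    constructor
    · intro d hd
      have := MvPolynomial.support_mul _ _ hd
      rw [Finset.mem_add] at this
      obtain ⟨d1, hd1, d2, hd2, rfl⟩ := this
      obtain ⟨j, hij, rfl⟩ := support_linear A hA hd1
      rw [wtM_cons, wt_add, wt_single, one_mul]
      have := ih1 d2 hd2
      omega
    · -- coefficient computation
      have hrw : (∑ j, C (A i j) * X j) * ((M.map fun i => ∑ j, C (A i j) * X j)).prod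
          = ∑ j, C (A i j) * (((M.map fun i => ∑ j, C (A i j) * X j)).prod * X j) := by
        rw [Finset.sum_mul]
        exact Finset.sum_congr rfl fun j _ => by ring
      rw [hrw, MvPolynomial.coeff_sum]
      have hQ := ih1
      set Q := ((M.map fun i => ∑ j, C (A i j) * X j)).prod with hQdef
      have hsum : ∀ j : Fin r, coeff (cnt (i ::ₘ M)) (C (A i j) * (Q * X j))
          = A i j * (if j ∈ (cnt (i ::ₘ M)).support then
              coeff ((cnt (i ::ₘ M)) - Finsupp.single j 1) Q else 0) := by
        intro j
        rw [coeff_C_mul, MvPolynomial.coeff_mul_X']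
      have hmem : (cnt (i ::ₘ M)) i ≥ 1 := by
        rw [cnt_cons]; simp
      rw [Finset.sum_congr rfl fun j _ => hsum j]
      rw [Finset.sum_eq_single i]
      · rw [if_pos (Finsupp.mem_support_iff.mpr (by omega)), cnt_cons,
          add_tsub_cancel_left, ih2]
      · intro j _ hji
        rcases lt_or_gt_of_ne hji with hlt | hgt
        · rw [hA i j hlt, zero_mul]
        · -- j > i: coefficient of Q at cnt(i::M) - single j 1 is zero by weight
          by_cases hjs : j ∈ (cnt (i ::ₘ M)).support
          · rw [if_pos hjs]
            have hj1 : 1 ≤ (cnt (i ::ₘ M)) j := by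
              have := Finsupp.mem_support_iff.mp hjs; omega
            have hwt : wt ((cnt (i ::ₘ M)) - Finsupp.single j 1) = wt (cnt (i ::ₘ M)) - j :=
              wt_sub_single hj1
            rw [wt_cnt, wtM_cons] at hwt
            have hjle : (j : ℕ) ≤ (i : ℕ) + wtM M := by
              have := le_wt hj1; rwa [wt_cnt, wtM_cons] at this
            have hlt2 : wt ((cnt (i ::ₘ M)) - Finsupp.single j 1) < wtM M := by
              have : (i : ℕ) < (j : ℕ) := hgt
              omega
            have : coeff ((cnt (i ::ₘ M)) - Finsupp.single j 1) Q = 0 := by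
              by_contra hc
              have hmem2 := MvPolynomial.mem_support_iff.mpr hc
              have := hQ _ hmem2
              omega
            rw [this, mul_zero]
          · rw [if_neg hjs, mul_zero]
      · intro h; exact absurd (Finset.mem_univ i) h

include hA in
lemma coeff_tri (m : Fin r → ℕ) :
    coeff (Finsupp.equivFunOnFinite.symm m) (∏ i, (∑ j, C (A i j) * X j) ^ m i)
      = ∏ i, A i i ^ m i := by
  set M : Multiset (Fin r) := Finset.univ.val.bind fun i => Multiset.replicate (m i) i with hM
  have hcnt : cnt M = Finsupp.equivFunOnFinite.symm m := by
    ext j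
    rw [cnt, Multiset.toFinsupp_apply, hM, Multiset.count_bind]
    have : ∀ i : Fin r, Multiset.count j (Multiset.replicate (m i) i)
        = if i = j then m i else 0 := fun i => Multiset.count_replicate _ _ _
    rw [show (Multiset.map (fun b => Multiset.count j (Multiset.replicate (m b) b))
        Finset.univ.val).sum = ∑ i : Fin r, if i = j then m i else 0 by
      rw [Finset.sum]; exact congrArg _ (Multiset.map_congr rfl fun i _ => this i)]
    simp
  have hprod : ∀ (f : Fin r → MvPolynomial (Fin r) R),
      ((M.map f).prod) = ∏ i, (f i) ^ m i := by
    intro f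
    rw [hM, Multiset.map_bind, Multiset.prod_bind]
    rw [Finset.prod]
    refine congrArg _ (Multiset.map_congr rfl fun i _ => ?_)
    simp [Multiset.prod_replicate]
  have hprodR : ∀ (f : Fin r → R), ((M.map f).prod) = ∏ i, (f i) ^ m i := by
    intro f
    rw [hM, Multiset.map_bind, Multiset.prod_bind]
    rw [Finset.prod]
    refine congrArg _ (Multiset.map_congr rfl fun i _ => ?_)
    simp [Multiset.prod_replicate]
  have := (tri_key A hA M).2
  rw [hcnt, hprod, hprodR] at this
  exact this

end Tri






noncomputable def detPS (A : Matrix (Fin r) (Fin r) R) : PowerSeries R :=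
  (1 - (PowerSeries.X : PowerSeries R) • A.map (PowerSeries.C (R := R))).det

lemma geom (a : R) :
    ((1 : PowerSeries R) - PowerSeries.X * PowerSeries.C (R := R) a)
      * PowerSeries.mk (fun k => a ^ k) = 1 := by
  ext n
  rw [sub_mul, one_mul, map_sub, mul_assoc]
  cases n with
  | zero => simp
  | succ k =>
    rw [PowerSeries.coeff_succ_X_mul]
    simp [pow_succ, mul_comm]

lemma det_tri (A : Matrix (Fin r) (Fin r) R) (hA : ∀ i j : Fin r, j < i → A i j = 0) :
    detPS A = ∏ i, ((1 : PowerSeries R) - PowerSeries.X * PowerSeries.C (R := R) (A i i)) := by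
  have htri : (1 - (PowerSeries.X : PowerSeries R) • A.map (PowerSeries.C (R := R))).BlockTriangular id := by
    intro i j hij
    simp only [Matrix.sub_apply, Matrix.smul_apply, Matrix.map_apply, smul_eq_mul]
    have hij' : j < i := hij
    rw [Matrix.one_apply_ne (ne_of_gt hij'), hA i j hij']
    simp
  rw [detPS, Matrix.det_of_upperTriangular htri]
  refine Finset.prod_congr rfl fun i _ => ?_
  simp [Matrix.one_apply, smul_eq_mul]

lemma mk_prod (lam : Fin r → R) :
    PowerSeries.mk (fun n => ∑ m ∈ Finset.Nat.antidiagonalTuple r n, ∏ i, lam i ^ m i)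
      = ∏ i, PowerSeries.mk (fun k => lam i ^ k) := by
  ext n
  rw [PowerSeries.coeff_mk, PowerSeries.coeff_prod]
  simp only [PowerSeries.coeff_mk]
  refine Finset.sum_nbij' (fun m => Finsupp.equivFunOnFinite.symm m)
    (fun l => Finsupp.equivFunOnFinite l) ?_ ?_ ?_ ?_ ?_
  · intro m hm
    rw [Finset.mem_finsuppAntidiag]
    refine ⟨?_, Finset.subset_univ _⟩
    rw [Finset.Nat.mem_antidiagonalTuple] at hm
    simpa using hm
  · intro l hl
    rw [Finset.mem_finsuppAntidiag] at hl
    rw [Finset.Nat.mem_antidiagonalTuple]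
    simpa using hl.1
  · intro m _; simp
  · intro l _; simp
  · intro m _
    refine Finset.prod_congr rfl fun i _ => by simp


section Lift
variable {K : Type*} [Field K]




/-- embed an n×n matrix as lower-right block of (n+1)×(n+1) with 1 at top-left -/
def lift {n : ℕ} (Q : Matrix (Fin n) (Fin n) K) : Matrix (Fin (n+1)) (Fin (n+1)) K :=
  Matrix.of fun i j =>
    if h1 : i = 0 then (if j = 0 then 1 else 0)
    else if h2 : j = 0 then 0 else Q (i.pred h1) (j.pred h2)

@[simp] lemma lift_zero_zero {n : ℕ} (Q : Matrix (Fin n) (Fin n) K) : lift Q 0 0 = 1 := by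
  simp [lift]

@[simp] lemma lift_zero_succ {n : ℕ} (Q : Matrix (Fin n) (Fin n) K) (j : Fin n) :
    lift Q 0 j.succ = 0 := by
  simp [lift, Fin.succ_ne_zero]

@[simp] lemma lift_succ_zero {n : ℕ} (Q : Matrix (Fin n) (Fin n) K) (i : Fin n) :
    lift Q i.succ 0 = 0 := by
  simp [lift, Fin.succ_ne_zero]

@[simp] lemma lift_succ_succ {n : ℕ} (Q : Matrix (Fin n) (Fin n) K) (i j : Fin n) :
    lift Q i.succ j.succ = Q i j := by
  simp [lift, Fin.succ_ne_zero]

lemma lift_mul {n : ℕ} (Q1 Q2 : Matrix (Fin n) (Fin n) K) :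
    lift Q1 * lift Q2 = lift (Q1 * Q2) := by
  ext i j
  rw [Matrix.mul_apply, Fin.sum_univ_succ]
  induction i using Fin.cases with
  | zero =>
    induction j using Fin.cases with
    | zero => simp
    | succ j' => simp
  | succ i' =>
    induction j using Fin.cases with
    | zero => simp
    | succ j' => simp [Matrix.mul_apply]

lemma lift_one {n : ℕ} : lift (1 : Matrix (Fin n) (Fin n) K) = 1 := by
  ext i j
  induction i using Fin.cases with
  | zero =>
    induction j using Fin.cases with
    | zero => simp
    | succ j' => simp [Matrix.one_apply, (Fin.succ_ne_zero j').symm]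
  | succ i' =>
    induction j using Fin.cases with
    | zero => simp [Matrix.one_apply, Fin.succ_ne_zero i']
    | succ j' => simp [Matrix.one_apply, Fin.succ_inj]

theorem tri_exists [IsAlgClosed K] : ∀ (n : ℕ) (A : Matrix (Fin n) (Fin n) K),
    ∃ P Pinv T : Matrix (Fin n) (Fin n) K, P * Pinv = 1 ∧
      (∀ i j : Fin n, j < i → T i j = 0) ∧ A = P * T * Pinv := by
  intro n
  induction n with
  | zero =>
    intro A
    exact ⟨1, 1, A, by simp, fun i j h => absurd i.2 (by omega), by simp⟩
  | succ n ih =>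
    intro A
    -- find eigenvector
    have : ∃ μ : K, ∃ v : Fin (n+1) → K, v ≠ 0 ∧ A.mulVec v = μ • v := by
      obtain ⟨μ, hμ⟩ := Module.End.exists_eigenvalue (Matrix.mulVecLin A)
      obtain ⟨v, hv⟩ := hμ.exists_hasEigenvector
      exact ⟨μ, v, hv.2, hv.apply_eq_smul⟩
    obtain ⟨μ, v, hv0, hveig⟩ := this
    obtain ⟨i₀, hi₀⟩ := Function.ne_iff.mp hv0
    set σ : Equiv.Perm (Fin (n+1)) := Equiv.swap 0 i₀ with hσ
    set u : Fin (n+1) → K := v ∘ σ with hu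
    have hu0 : u 0 ≠ 0 := by
      simp only [hu, hσ, Function.comp_apply, Equiv.swap_apply_left]
      exact hi₀
    -- completion of u to a matrix with first column u, lower triangular
    set E : Matrix (Fin (n+1)) (Fin (n+1)) K :=
      Matrix.of (fun i j => if j = 0 then u i else (1 : Matrix (Fin (n+1)) (Fin (n+1)) K) i j)
      with hE
    have hEtri : E.BlockTriangular (OrderDual.toDual : Fin (n+1) → (Fin (n+1))ᵒᵈ) := by
      intro i j hij
      have hij' : i < j := hij
      have hj : j ≠ 0 := by
        intro h
        rw [h] at hij'
        simp at hij'
      simp [hE, hj, Matrix.one_apply_ne (ne_of_lt hij')]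
    have hEdet : E.det = u 0 := by
      rw [Matrix.det_of_lowerTriangular E hEtri, Fin.prod_univ_succ]
      have h1 : ∀ i : Fin n, E i.succ i.succ = 1 := fun i => by
        simp [hE, Fin.succ_ne_zero, Matrix.one_apply]
      simp [hE, h1, Fin.succ_ne_zero]
    set P : Matrix (Fin (n+1)) (Fin (n+1)) K := E.submatrix σ id with hP
    have hPdet : IsUnit P.det := by
      rw [hP, Matrix.det_permute, hEdet]
      refine IsUnit.mul ?_ (isUnit_iff_ne_zero.mpr hu0)
      rcases Int.isUnit_iff.mp (Equiv.Perm.sign σ).isUnit with h | h <;> rw [h] <;> simp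
    have hPcol : ∀ i, P i 0 = v i := by
      intro i
      show E (σ i) 0 = v i
      have : E (σ i) 0 = u (σ i) := by simp [hE]
      rw [this, hu]
      show v (σ (σ i)) = v i
      rw [hσ]
      simp
    have hPP : P * P⁻¹ = 1 := Matrix.mul_nonsing_inv P hPdet
    have hPP' : P⁻¹ * P = 1 := Matrix.nonsing_inv_mul P hPdet
    set M : Matrix (Fin (n+1)) (Fin (n+1)) K := P⁻¹ * A * P with hM
    have hAP : ∀ k, (A * P) k 0 = μ * P k 0 := by
      intro k
      rw [Matrix.mul_apply]
      have h2 : (A.mulVec v) k = μ * v k := by rw [hveig]; simp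
      calc ∑ j, A k j * P j 0 = ∑ j, A k j * v j :=
            Finset.sum_congr rfl fun j _ => by rw [hPcol]
        _ = (A.mulVec v) k := rfl
        _ = μ * v k := h2
        _ = μ * P k 0 := by rw [hPcol]
    have hM0 : ∀ i : Fin n, M i.succ 0 = 0 := by
      intro i
      have hMalt : M = P⁻¹ * (A * P) := by rw [hM, mul_assoc]
      rw [hMalt, Matrix.mul_apply]
      calc ∑ k, P⁻¹ i.succ k * (A * P) k 0
          = ∑ k, P⁻¹ i.succ k * (μ * P k 0) :=
            Finset.sum_congr rfl fun k _ => by rw [hAP]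
        _ = μ * ∑ k, P⁻¹ i.succ k * P k 0 := by
            rw [Finset.mul_sum]; exact Finset.sum_congr rfl fun k _ => by ring
        _ = μ * (P⁻¹ * P) i.succ 0 := by rw [Matrix.mul_apply]
        _ = 0 := by rw [hPP', Matrix.one_apply_ne (Fin.succ_ne_zero i), mul_zero]
    set B : Matrix (Fin n) (Fin n) K := Matrix.of (fun i j => M i.succ j.succ) with hB
    obtain ⟨Q, Qinv, T', hQQ, hT', hBeq⟩ := ih B
    have hQQ' : Qinv * Q = 1 := mul_eq_one_comm.mp hQQ
    have h5 : lift Q * lift Qinv = (1 : Matrix (Fin (n+1)) (Fin (n+1)) K) := by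
      rw [lift_mul, hQQ, lift_one]
    have h6 : lift Qinv * lift Q = (1 : Matrix (Fin (n+1)) (Fin (n+1)) K) := by
      rw [lift_mul, hQQ', lift_one]
    set T : Matrix (Fin (n+1)) (Fin (n+1)) K := lift Qinv * M * lift Q with hT
    have hQBQ : Qinv * B * Q = T' := by
      rw [hBeq]
      calc Qinv * (Q * T' * Qinv) * Q = (Qinv * Q) * T' * (Qinv * Q) := by
            simp only [mul_assoc]
        _ = T' := by rw [hQQ']; simp
    -- entries of (lift Qinv * M)
    have hLiM : ∀ (i' : Fin n) (l : Fin (n+1)),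
        (lift Qinv * M) i'.succ l = ∑ k', Qinv i' k' * M k'.succ l := by
      intro i' l
      rw [Matrix.mul_apply, Fin.sum_univ_succ, lift_succ_zero, zero_mul, zero_add]
      exact Finset.sum_congr rfl fun k' _ => by rw [lift_succ_succ]
    refine ⟨P * lift Q, lift Qinv * P⁻¹, T, ?_, ?_, ?_⟩
    · calc (P * lift Q) * (lift Qinv * P⁻¹) = P * (lift Q * lift Qinv) * P⁻¹ := by
            simp only [mul_assoc]
        _ = 1 := by rw [h5, mul_one, hPP]
    · intro i j hij
      have hi0 : i ≠ 0 := by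
        intro h
        rw [h] at hij
        simp at hij
      obtain ⟨i', rfl⟩ : ∃ i', i = Fin.succ i' := ⟨i.pred hi0, by simp⟩
      induction j using Fin.cases with
      | zero =>
        rw [hT, Matrix.mul_apply, Fin.sum_univ_succ]
        have e1 : ∀ l' : Fin n, lift Q l'.succ 0 = 0 := fun l' => lift_succ_zero Q l'
        simp only [lift_zero_zero, e1, mul_zero, mul_one]
        rw [Finset.sum_const_zero, add_zero, hLiM, Finset.sum_eq_zero]
        intro k' _
        rw [hM0, mul_zero]
      | succ j' =>
        have hj'i' : j' < i' := Fin.succ_lt_succ_iff.mp hij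
        rw [hT, Matrix.mul_apply, Fin.sum_univ_succ, lift_zero_succ, mul_zero, zero_add]
        have : ∀ l' : Fin n, (lift Qinv * M) i'.succ l'.succ * lift Q l'.succ j'.succ
            = (∑ k', Qinv i' k' * B k' l') * Q l' j' := by
          intro l'
          rw [hLiM, lift_succ_succ]
          rfl
        rw [Finset.sum_congr rfl fun l' _ => this l']
        have : ∑ l', (∑ k', Qinv i' k' * B k' l') * Q l' j' = (Qinv * B * Q) i' j' := by
          rw [Matrix.mul_apply]
          exact Finset.sum_congr rfl fun l' _ => by rw [Matrix.mul_apply]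
        rw [this, hQBQ]
        exact hT' i' j' hj'i'
    · have goal : (P * lift Q) * T * (lift Qinv * P⁻¹) = A := by
        rw [hT, hM]
        simp only [← mul_assoc]
        rw [mul_assoc P (lift Q) (lift Qinv), h5, mul_one, hPP, one_mul]
        rw [mul_assoc (A * P) (lift Q) (lift Qinv), h5, mul_one]
        rw [mul_assoc A P P⁻¹, hPP, mul_one]
      exact goal.symm


end Lift

/-! ## Full identity for triangular matrices -/

lemma tri_case (A : Matrix (Fin r) (Fin r) R) (hA : ∀ i j : Fin r, j < i → A i j = 0) :
    PowerSeries.mk (hcoeff A) * detPS A = 1 := by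
  have h1 : PowerSeries.mk (hcoeff A) = ∏ i, PowerSeries.mk fun k => A i i ^ k := by
    rw [← mk_prod]
    apply congrArg
    funext n
    exact Finset.sum_congr rfl fun m _ => coeff_tri A hA m
  rw [h1, det_tri A hA, ← Finset.prod_mul_distrib]
  refine Finset.prod_eq_one fun i _ => ?_
  rw [mul_comm]
  exact geom _

/-! ## Conjugation invariance of detPS -/

lemma detPS_conj (P A Pinv : Matrix (Fin r) (Fin r) R) (h1 : P * Pinv = 1) :
    detPS (P * A * Pinv) = detPS A := by
  have hmap : ∀ M N : Matrix (Fin r) (Fin r) R,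
      (M * N).map (PowerSeries.C (R := R)) = M.map (PowerSeries.C (R := R)) * N.map (PowerSeries.C (R := R)) :=
    fun M N => Matrix.map_mul
  have hone : (1 : Matrix (Fin r) (Fin r) R).map (PowerSeries.C (R := R))
      = (1 : Matrix (Fin r) (Fin r) (PowerSeries R)) := Matrix.map_one _ (map_zero _) (map_one _)
  have hPP' : P.map (PowerSeries.C (R := R)) * Pinv.map (PowerSeries.C (R := R)) = 1 := by
    rw [← hmap, h1, hone]
  have e1 : (1 : Matrix (Fin r) (Fin r) (PowerSeries R))
        - (PowerSeries.X : PowerSeries R) • (P * A * Pinv).map (PowerSeries.C (R := R))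
      = P.map (PowerSeries.C (R := R))
          * (1 - (PowerSeries.X : PowerSeries R) • A.map (PowerSeries.C (R := R))) * Pinv.map (PowerSeries.C (R := R)) := by
    rw [hmap, hmap, Matrix.mul_sub, Matrix.sub_mul, Matrix.mul_one, hPP']
    congr 1
    rw [Matrix.mul_smul, Matrix.smul_mul]
  rw [detPS, e1, Matrix.det_mul, Matrix.det_mul, detPS]
  have h2 : (P.map (PowerSeries.C (R := R))).det * (Pinv.map (PowerSeries.C (R := R))).det = 1 := by
    rw [← Matrix.det_mul, hPP', Matrix.det_one]
  calc (P.map (PowerSeries.C (R := R))).det * (1 - (PowerSeries.X : PowerSeries R) • A.map (PowerSeries.C (R := R))).det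
        * (Pinv.map (PowerSeries.C (R := R))).det
      = (1 - (PowerSeries.X : PowerSeries R) • A.map (PowerSeries.C (R := R))).det
          * ((P.map (PowerSeries.C (R := R))).det * (Pinv.map (PowerSeries.C (R := R))).det) := by ring
    _ = (1 - (PowerSeries.X : PowerSeries R) • A.map (PowerSeries.C (R := R))).det := by rw [h2, mul_one]

/-! ## the identity over an algebraically closed field -/

theorem field_case {K : Type*} [Field K] [IsAlgClosed K] {r : ℕ}
    (A : Matrix (Fin r) (Fin r) K) :
    PowerSeries.mk (hcoeff A) * detPS A = 1 := by
  obtain ⟨P, Pinv, T, hPP, hTtri, hAeq⟩ := tri_exists r A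
  have h1 : hcoeff A = hcoeff T := by rw [hAeq]; exact hcoeff_conj P T Pinv hPP
  have h2 : detPS A = detPS T := by rw [hAeq]; exact detPS_conj P T Pinv hPP
  rw [h1, h2]
  exact tri_case T hTtri

/-! ## base change -/

section BaseChange

variable {R' : Type*} [CommRing R'] (f : R →+* R')

lemma hcoeff_map (A : Matrix (Fin r) (Fin r) R) (n : ℕ) :
    f (hcoeff A n) = hcoeff (A.map f) n := by
  rw [hcoeff, hcoeff, map_sum]
  refine Finset.sum_congr rfl fun m _ => ?_
  rw [← MvPolynomial.coeff_map]
  congr 1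
  rw [map_prod]
  refine Finset.prod_congr rfl fun i _ => ?_
  rw [map_pow, map_sum]
  refine congrArg (· ^ m i) (Finset.sum_congr rfl fun j _ => ?_)
  rw [map_mul, MvPolynomial.map_C, MvPolynomial.map_X, Matrix.map_apply]

lemma detPS_map (A : Matrix (Fin r) (Fin r) R) :
    PowerSeries.map f (detPS A) = detPS (A.map f) := by
  rw [detPS, RingHom.map_det, detPS]
  congr 1
  ext i j
  simp only [RingHom.mapMatrix_apply, Matrix.map_apply, Matrix.sub_apply, Matrix.smul_apply,
    smul_eq_mul, map_sub, map_mul, PowerSeries.map_X, PowerSeries.map_C]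
  by_cases h : i = j
  · subst h; simp
  · simp [Matrix.one_apply_ne h]

lemma full_map (A : Matrix (Fin r) (Fin r) R) :
    PowerSeries.map f (PowerSeries.mk (hcoeff A) * detPS A)
      = PowerSeries.mk (hcoeff (A.map f)) * detPS (A.map f) := by
  rw [map_mul, detPS_map]
  congr 1
  ext n
  rw [PowerSeries.coeff_map, PowerSeries.coeff_mk, PowerSeries.coeff_mk, hcoeff_map]

end BaseChange

/-! ## the generic matrix -/

theorem key {R : Type*} [CommRing R] {r : ℕ} (A : Matrix (Fin r) (Fin r) R) :
    PowerSeries.mk (hcoeff A) * detPS A = 1 := by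
  classical
  set S := MvPolynomial (Fin r × Fin r) ℤ
  set 𝔸 : Matrix (Fin r) (Fin r) S := Matrix.of fun i j => MvPolynomial.X (i, j) with h𝔸
  have hgen : PowerSeries.mk (hcoeff 𝔸) * detPS 𝔸 = 1 := by
    refine PowerSeries.ext fun n => ?_
    set c : S := PowerSeries.coeff (R := S) n (PowerSeries.mk (hcoeff 𝔸) * detPS 𝔸) with hc
    have hx : ∀ x : (Fin r × Fin r) → ℂ,
        MvPolynomial.eval x (MvPolynomial.map (Int.castRingHom ℂ) c)
          = MvPolynomial.eval x (MvPolynomial.map (Int.castRingHom ℂ)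
              ((PowerSeries.coeff (R := S) n) (1 : PowerSeries S))) := by
      intro x
      have hφ : ∀ s : S, MvPolynomial.eval x (MvPolynomial.map (Int.castRingHom ℂ) s)
          = MvPolynomial.eval₂ (Int.castRingHom ℂ) x s := by
        intro s
        rw [MvPolynomial.eval₂_eq_eval_map]
      rw [hφ, hφ]
      set φ : S →+* ℂ := MvPolynomial.eval₂Hom (Int.castRingHom ℂ) x with hφdef
      show φ c = φ _
      rw [hc, ← PowerSeries.coeff_map, full_map, field_case]
      rw [PowerSeries.coeff_one, PowerSeries.coeff_one]
      split_ifs <;> simp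
    have hmapeq := MvPolynomial.funext hx
    have hinj : Function.Injective
        (MvPolynomial.map (Int.castRingHom ℂ) : S → MvPolynomial (Fin r × Fin r) ℂ) :=
      MvPolynomial.map_injective _ Int.cast_injective
    exact hinj hmapeq
  -- specialize
  set φ : S →+* R := MvPolynomial.eval₂Hom (Int.castRingHom R) (fun p => A p.1 p.2) with hφ
  have hAmap : 𝔸.map φ = A := by
    ext i j
    show φ (MvPolynomial.X (i, j)) = A i j
    rw [hφ]
    exact MvPolynomial.eval₂Hom_X' _ _ _
  have := congrArg (PowerSeries.map φ) hgen
  rw [full_map, hAmap, map_one] at this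
  exact this

end MMT



/-- **MacMahon's Master Theorem.** For an `r × r` matrix `A` over a commutative ring,
with `X i = Σ_j A i j * x j` and `G m` the coefficient of `x^m` in `Π_i (X i)^(m i)`,
the generating function `Σ_m G m` (organized by total degree, with a formal variable
`t` recording the degree) is the inverse of `det (I - t A)` in `R⟦t⟧`. -/
theorem macmahon_master_theorem {R : Type*} [CommRing R] {r : ℕ}
    (A : Matrix (Fin r) (Fin r) R) (G : (Fin r → ℕ) → R)
    (hG : ∀ m : Fin r → ℕ,
      G m = MvPolynomial.coeff (Finsupp.equivFunOnFinite.symm m)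
        (∏ i, (∑ j, MvPolynomial.C (A i j) * MvPolynomial.X j) ^ m i)) :
    (PowerSeries.mk fun n => ∑ m ∈ Finset.Nat.antidiagonalTuple r n, G m) *
      Matrix.det (1 - (PowerSeries.X : PowerSeries R) • A.map (PowerSeries.C (R := R))) = 1 := by
  have h : (PowerSeries.mk fun n => ∑ m ∈ Finset.Nat.antidiagonalTuple r n, G m)
      = PowerSeries.mk (MMT.hcoeff A) := by
    congr 1
    funext n
    exact Finset.sum_congr rfl fun m _ => hG m
  rw [h]
  exact MMT.key A
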